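/- Let v₀, v₁, v₂, v₃ ∈ ℂ² be nonzero vectors that are pairwise linearly independent over ℂ, and let g ∈ GL₂(ℂ). Set w_i = g·v_i for i = 0,…,3. Then f(w₀,w₁,w₂,w₃) · ∫_{Δ³} Q_w(t)^{-2} dt₁ dt₂ dt₃ = f(v₀,v₁,v₂,v₃) · ∫_{Δ³} Q_v(t)^{-2} dt₁ dt₂ dt₃. -/

import Mathlib

open MeasureTheory

/-- `det2 v w = v₁·w₂ − v₂·w₁`, the determinant of the 2×2 matrix with columns `v` and `w`. -/
noncomputable def det2 (v w : Fin 2 → ℂ) : ℂ := v 0 * w 1 - v 1 * w 0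

/-- `f(v₀,v₁,v₂,v₃) = Im( det(v₀,v₁)·det(v₂,v₃)·conj(det(v₀,v₃))·conj(det(v₁,v₂)) )`. -/
noncomputable def f4 (v₀ v₁ v₂ v₃ : Fin 2 → ℂ) : ℝ :=
  (det2 v₀ v₁ * det2 v₂ v₃ * (starRingEnd ℂ) (det2 v₀ v₃) *
    (starRingEnd ℂ) (det2 v₁ v₂)).im

/-- `Q_v(t) = ∑_{i≠j} t_i t_j |det(v_i,v_j)|²`, sum over ordered pairs of distinct indices. -/
noncomputable def Qform (v : Fin 4 → Fin 2 → ℂ) (t : Fin 4 → ℝ) : ℝ :=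
  ∑ i : Fin 4, ∑ j : Fin 4,
    if i ≠ j then t i * t j * ‖det2 (v i) (v j)‖ ^ 2 else 0

/-- The parameter domain `{(t₁,t₂,t₃) : tᵢ ≥ 0, t₁+t₂+t₃ ≤ 1}` of the 3-simplex. -/
def simplexDom : Set (Fin 3 → ℝ) :=
  {p | (∀ i, 0 ≤ p i) ∧ p 0 + p 1 + p 2 ≤ 1}

/-- The point of the 3-simplex with coordinates `(1−t₁−t₂−t₃, t₁, t₂, t₃)`. -/
noncomputable def tOf (p : Fin 3 → ℝ) : Fin 4 → ℝ :=
  ![1 - p 0 - p 1 - p 2, p 0, p 1, p 2]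

/-- `∫_{Δ³} Q_v(t)^{-2} dt₁ dt₂ dt₃`. -/
noncomputable def Jint (v : Fin 4 → Fin 2 → ℂ) : ℝ :=
  ∫ p in simplexDom, (Qform v (tOf p) ^ 2)⁻¹


lemma det2_mulVec (M : Matrix (Fin 2) (Fin 2) ℂ) (a b : Fin 2 → ℂ) :
    det2 (M.mulVec a) (M.mulVec b) = M.det * det2 a b := by
  simp [det2, Matrix.mulVec, Matrix.det_fin_two, dotProduct, Fin.sum_univ_two]
  ring

/-- `f(v₀,…,v₃)·∫_{Δ³} Q_v(t)^{-2} dt` is invariant under the action of `GL₂(ℂ)`. -/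
theorem f4_mul_Jint_GL_invariant (v : Fin 4 → Fin 2 → ℂ)
    (hv : ∀ i, v i ≠ 0)
    (hind : ∀ i j : Fin 4, i ≠ j → LinearIndependent ℂ ![v i, v j])
    (g : GL (Fin 2) ℂ) (w : Fin 4 → Fin 2 → ℂ)
    (hw : ∀ i, w i = (g : Matrix (Fin 2) (Fin 2) ℂ).mulVec (v i)) :
    f4 (w 0) (w 1) (w 2) (w 3) * Jint w = f4 (v 0) (v 1) (v 2) (v 3) * Jint v := by
  set M := (g : Matrix (Fin 2) (Fin 2) ℂ) with hM
  set c := ‖M.det‖ with hc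
  have hdet : M.det ≠ 0 := by
    have : IsUnit M := g.isUnit
    exact (Matrix.isUnit_iff_isUnit_det M).mp this |>.ne_zero
  have hcne : c ≠ 0 := by simpa [hc] using hdet
  have h1 : ∀ i j : Fin 4, det2 (w i) (w j) = M.det * det2 (v i) (v j) := by
    intro i j; rw [hw, hw]; exact det2_mulVec M (v i) (v j)
  have hf : f4 (w 0) (w 1) (w 2) (w 3) = c ^ 4 * f4 (v 0) (v 1) (v 2) (v 3) := by
    unfold f4
    rw [h1, h1, h1, h1, map_mul, map_mul]
    have key : M.det * det2 (v 0) (v 1) * (M.det * det2 (v 2) (v 3)) *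
        ((starRingEnd ℂ) M.det * (starRingEnd ℂ) (det2 (v 0) (v 3))) *
        ((starRingEnd ℂ) M.det * (starRingEnd ℂ) (det2 (v 1) (v 2))) =
        (M.det * (starRingEnd ℂ) M.det) * (M.det * (starRingEnd ℂ) M.det) *
        (det2 (v 0) (v 1) * det2 (v 2) (v 3) * (starRingEnd ℂ) (det2 (v 0) (v 3)) *
          (starRingEnd ℂ) (det2 (v 1) (v 2))) := by ring
    rw [key, Complex.mul_conj, ← Complex.ofReal_mul, Complex.mul_im]
    simp only [Complex.ofReal_re, Complex.ofReal_im, Complex.normSq_eq_norm_sq, ← hc]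
    ring
  have hQ : ∀ t, Qform w t = c ^ 2 * Qform v t := by
    intro t
    simp only [Qform, h1, map_mul, norm_mul, mul_pow, Finset.mul_sum, mul_ite, mul_zero]
    refine Finset.sum_congr rfl fun i _ => Finset.sum_congr rfl fun j _ => ?_
    split
    · rw [← hc]; ring
    · rfl
  have hJ : Jint w = (c ^ 4)⁻¹ * Jint v := by
    unfold Jint
    rw [← MeasureTheory.integral_const_mul]
    refine MeasureTheory.integral_congr_ae (Filter.Eventually.of_forall fun p => ?_)
    dsimp only
    rw [hQ, mul_pow, mul_inv]
    congr 1
    rw [← pow_mul]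
  rw [hf, hJ]
  field_simp
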